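/- A finite group G whose conjugacy supercommuting graph is complete (every two elements have commuting conjugates) is abelian. -/

import Mathlib

open Finset in
/-- A finite group is not the union of conjugates of a proper subgroup. -/
lemma conj_cover_eq_top {G : Type*} [Group G] [Finite G] (H : Subgroup G)
    (hc : ∀ g : G, ∃ k : G, k⁻¹ * g * k ∈ H) : H = ⊤ := by
  classical
  cases nonempty_fintype G
  set N := Subgroup.normalizer (H : Set G) with hN
  -- the finset of nontrivial elements of H
  set Hs : Finset G := Finset.univ.filter (fun h => h ∈ H ∧ h ≠ 1) with hHs
  set F : (G ⧸ N) → Finset G := fun q => Hs.image (fun h => q.out * h * q.out⁻¹) with hF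
  have hcover : Finset.univ.erase (1 : G) ⊆ (Finset.univ : Finset (G ⧸ N)).biUnion F := by
    intro g hg
    have hg1 : g ≠ 1 := (Finset.mem_erase.mp hg).1
    obtain ⟨k, hk⟩ := hc g
    refine Finset.mem_biUnion.mpr ⟨QuotientGroup.mk k, Finset.mem_univ _, ?_⟩
    obtain ⟨n, hn⟩ := QuotientGroup.mk_out_eq_mul N k
    refine Finset.mem_image.mpr ⟨(k * (n : G))⁻¹ * g * (k * (n : G)), ?_, ?_⟩
    · refine Finset.mem_filter.mpr ⟨Finset.mem_univ _, ?_, ?_⟩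
      · have hnN : (n : G) ∈ N := n.2
        have := (Subgroup.mem_normalizer_iff.mp (N.inv_mem hnN) (k⁻¹ * g * k)).mp hk
        simpa [mul_assoc, mul_inv_rev] using this
      · intro hcontra
        apply hg1
        have : g = (k * (n : G)) * ((k * (n : G))⁻¹ * g * (k * (n : G))) * (k * (n : G))⁻¹ := by
          group
        rw [this, hcontra]; group
    · rw [hn]; group
  have hcard : Fintype.card G - 1 ≤ Fintype.card (G ⧸ N) * Hs.card := by
    calc Fintype.card G - 1 = (Finset.univ.erase (1 : G)).card := by
          rw [Finset.card_erase_of_mem (Finset.mem_univ _), Finset.card_univ]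
      _ ≤ ((Finset.univ : Finset (G ⧸ N)).biUnion F).card := Finset.card_le_card hcover
      _ ≤ ∑ q : G ⧸ N, (F q).card := Finset.card_biUnion_le
      _ ≤ ∑ _q : G ⧸ N, Hs.card := Finset.sum_le_sum fun q _ => Finset.card_image_le
      _ = Fintype.card (G ⧸ N) * Hs.card := by rw [Finset.sum_const, Finset.card_univ, smul_eq_mul]
  -- relate cardinalities
  have hHcard : Hs.card + 1 = Nat.card H := by
    have : Nat.card H = (Finset.univ.filter (fun h => h ∈ H)).card := by
      rw [Nat.card_eq_fintype_card, Fintype.card_subtype]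
    rw [this]
    have h1 : (Finset.univ.filter (fun h => h ∈ H)) = insert (1 : G) Hs := by
      ext g
      simp only [Finset.mem_filter, Finset.mem_univ, true_and, Finset.mem_insert, hHs]
      by_cases hg : g = 1 <;> simp [hg, H.one_mem]
    rw [h1, Finset.card_insert_of_notMem (by simp [hHs])]
  have hQ : Fintype.card (G ⧸ N) = N.index := by
    rw [← Nat.card_eq_fintype_card, Subgroup.index]
  have hdvd : N.index ∣ H.index := Subgroup.index_dvd_of_le H.le_normalizer
  have hHpos : 0 < H.index := Nat.pos_of_ne_zero H.index_ne_zero_of_finite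
  have hle : N.index ≤ H.index := Nat.le_of_dvd hHpos hdvd
  have hmul : H.index * Nat.card H = Nat.card G := Subgroup.index_mul_card H
  have hGpos : 0 < Nat.card G := Nat.card_pos
  rw [hQ] at hcard
  have hcard2 : Nat.card G - 1 ≤ H.index * Hs.card := by
    rw [Nat.card_eq_fintype_card]
    exact hcard.trans (Nat.mul_le_mul_right _ hle)
  have hexp : H.index * Hs.card + H.index = Nat.card G := by
    rw [← hmul, ← hHcard]; ring
  have hidx : H.index = 1 := by omega
  exact Subgroup.index_eq_one.mp hidx

theorem stmt_9 (G : Type*) [Group G] [Finite G]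
    (h : ∀ x y : G, ∃ a b : G, Commute (a⁻¹ * x * a) (b⁻¹ * y * b)) :
    ∀ x y : G, x * y = y * x := by
  intro x y
  have hx : Subgroup.centralizer {x} = ⊤ := by
    apply conj_cover_eq_top
    intro g
    obtain ⟨a, b, hab⟩ := h x g
    refine ⟨b * a⁻¹, Subgroup.mem_centralizer_iff.mpr ?_⟩
    intro w hw
    rw [Set.mem_singleton_iff] at hw
    rw [hw]
    have key : Commute x (a * (b⁻¹ * g * b) * a⁻¹) := by
      have := hab
      unfold Commute SemiconjBy at this ⊢
      have h2 := congrArg (fun z => a * z * a⁻¹) this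
      calc x * (a * (b⁻¹ * g * b) * a⁻¹)
          = a * ((a⁻¹ * x * a) * (b⁻¹ * g * b)) * a⁻¹ := by group
        _ = a * ((b⁻¹ * g * b) * (a⁻¹ * x * a)) * a⁻¹ := by rw [this]
        _ = (a * (b⁻¹ * g * b) * a⁻¹) * x := by group
    have heq : (b * a⁻¹)⁻¹ * g * (b * a⁻¹) = a * (b⁻¹ * g * b) * a⁻¹ := by group
    rw [heq]
    exact key.eq
  have : y ∈ Subgroup.centralizer {x} := hx ▸ Subgroup.mem_top y
  exact Subgroup.mem_centralizer_iff.mp this x rfl
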